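/- arXiv:2209.09831 — 8 statements merged into one kernel-verified Lean document; each statement's English description precedes it below -/
import Mathlib

section
/- In the Boolean algebra $\mathcal{A}$ of finite and cofinite subsets of an uncountable set $X$, if $x_1, x_2, \ldots$ are distinct elements of $X$ and $A_n = \{x_n\}$, then the sequence $(A_n)$ $O_2$-converges to $\emptyset$, but $(A_n)$ is not $O_1$-convergent (since any $O_1$-convergent sequence in $\mathcal{A}$ is eventually constant). Hence $O_2$-convergence does not imply $O_1$-convergence. -/
/-- Eventually, for nets indexed by a preordered set. -/
def EvAtTop {Γ : Type*} [Preorder Γ] (p : Γ → Prop) : Prop :=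
  ∃ γ₀, ∀ γ, γ₀ ≤ γ → p γ

/-- $O_1$-convergence of a net to a point in a poset. -/
def O1Conv {P : Type*} {Γ : Type*} [PartialOrder P] [Preorder Γ]
    (x : Γ → P) (l : P) : Prop :=
  ∃ y z : Γ → P, Monotone y ∧ Antitone z ∧
    IsLUB (Set.range y) l ∧ IsGLB (Set.range z) l ∧
    EvAtTop (fun γ => y γ ≤ x γ ∧ x γ ≤ z γ)

/-- $O_2$-convergence of a net to a point in a poset. -/
def O2Conv {P : Type*} {Γ : Type*} [PartialOrder P] [Preorder Γ]
    (x : Γ → P) (l : P) : Prop :=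
  ∃ M N : Set P, M.Nonempty ∧ DirectedOn (· ≤ ·) M ∧
    N.Nonempty ∧ DirectedOn (· ≥ ·) N ∧
    IsLUB M l ∧ IsGLB N l ∧
    ∀ m ∈ M, ∀ n ∈ N, EvAtTop (fun γ => m ≤ x γ ∧ x γ ≤ n)


theorem o2_not_o1_in_finite_cofinite_algebra
    {X : Type*} [Uncountable X] (x : ℕ → X) (hx : Function.Injective x) :
    let 𝒜 : Type _ := {A : Set X // A.Finite ∨ Aᶜ.Finite}
    let A : ℕ → 𝒜 := fun n => ⟨{x n}, Or.inl (Set.finite_singleton _)⟩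
    let bot : 𝒜 := ⟨∅, Or.inl Set.finite_empty⟩
    O2Conv A bot ∧ ¬ ∃ l : 𝒜, O1Conv A l := by
  intro 𝒜 A bot
  constructor
  · -- O2-convergence
    refine ⟨{bot}, {B : 𝒜 | (B.val)ᶜ.Finite}, ⟨bot, rfl⟩, ?_, ?_, ?_, isLUB_singleton,
      ⟨?_, ?_⟩, ?_⟩
    · rintro a ha b hb
      rw [Set.mem_singleton_iff] at ha hb
      subst ha; subst hb
      exact ⟨bot, rfl, le_rfl, le_rfl⟩
    · exact ⟨⟨Set.univ, Or.inr (by simp)⟩, by simp⟩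
    · rintro a ha b hb
      refine ⟨⟨a.val ∩ b.val, Or.inr ?_⟩, ?_, ?_, ?_⟩
      · rw [Set.compl_inter]; exact ha.union hb
      · show (a.val ∩ b.val)ᶜ.Finite
        rw [Set.compl_inter]; exact ha.union hb
      · exact Set.inter_subset_left
      · exact Set.inter_subset_right
    · rintro B hB
      show (∅ : Set X) ⊆ B.val
      exact Set.empty_subset _
    · intro L hL
      show L.val ⊆ (∅ : Set X)
      intro p hp
      have hmem : (⟨{p}ᶜ, Or.inr (by simp)⟩ : 𝒜) ∈ {B : 𝒜 | (B.val)ᶜ.Finite} := by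
        show ({p}ᶜᶜ : Set X).Finite; simp
      have := hL hmem hp
      simp at this
    · intro m hm n hn
      rw [Set.mem_singleton_iff] at hm
      subst hm
      have hT : (x ⁻¹' (n.valᶜ)).Finite := hn.preimage hx.injOn
      obtain ⟨b, hb⟩ := hT.bddAbove
      refine ⟨b + 1, fun γ hγ => ⟨Set.empty_subset _, ?_⟩⟩
      show ({x γ} : Set X) ⊆ n.val
      rw [Set.singleton_subset_iff]
      by_contra h
      have : γ ∈ x ⁻¹' (n.valᶜ) := h
      have := hb this
      omega
  · -- not O1-convergent
    rintro ⟨l, y, z, hy, hz, hlub, hglb, γ₀, hev⟩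
    -- l ≤ bot
    have hub : bot ∈ upperBounds (Set.range y) := by
      rintro _ ⟨γ, rfl⟩
      intro p hp
      have h1 := (hev (max γ γ₀) (le_max_right _ _)).1
      have h2 := (hev (max γ γ₀ + 1) (le_trans (le_max_right _ _) (Nat.le_succ _))).1
      have hp1 : p ∈ ({x (max γ γ₀)} : Set X) :=
        h1 (hy (le_max_left γ γ₀) hp)
      have hp2 : p ∈ ({x (max γ γ₀ + 1)} : Set X) :=
        h2 (hy (le_trans (le_max_left γ γ₀) (Nat.le_succ _)) hp)
      rw [Set.mem_singleton_iff] at hp1 hp2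
      have := hx (hp1 ▸ hp2)
      omega
    -- each z (γ₀ + n) is cofinite
    have hfin : ∀ n : ℕ, ((z (γ₀ + n)).val)ᶜ.Finite := by
      intro n
      have hinf : (z (γ₀ + n)).val.Infinite := by
        apply Set.infinite_of_injective_forall_mem (f := fun k : ℕ => x (γ₀ + n + k))
        · intro a b h
          have := hx h
          omega
        · intro k
          have h2 := (hev (γ₀ + n + k) (by omega)).2
          have h3 : x (γ₀ + n + k) ∈ (z (γ₀ + n + k)).val :=
            h2 (Set.mem_singleton _)
          exact hz (show γ₀ + n ≤ γ₀ + n + k by omega) h3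
      exact (z (γ₀ + n)).2.resolve_left hinf
    have hC : (⋃ n : ℕ, ((z (γ₀ + n)).val)ᶜ).Countable :=
      Set.countable_iUnion fun n => (hfin n).countable
    have hne : (⋃ n : ℕ, ((z (γ₀ + n)).val)ᶜ) ≠ Set.univ := by
      intro h
      exact Set.not_countable_univ (h ▸ hC)
    obtain ⟨p, hp⟩ : ∃ p, p ∉ ⋃ n : ℕ, ((z (γ₀ + n)).val)ᶜ := by
      by_contra h
      push_neg at h
      exact hne (Set.eq_univ_of_forall h)
    simp only [Set.mem_iUnion, Set.mem_compl_iff, not_exists, not_not] at hp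
    have pmem : ∀ γ, p ∈ (z γ).val := by
      intro γ
      have h1 : p ∈ (z (γ₀ + γ)).val := hp γ
      exact hz (show γ ≤ γ₀ + γ by omega) h1
    have hqlb : (⟨{p}, Or.inl (Set.finite_singleton _)⟩ : 𝒜) ∈ lowerBounds (Set.range z) := by
      rintro _ ⟨γ, rfl⟩
      exact Set.singleton_subset_iff.mpr (pmem γ)
    have : (⟨{p}, Or.inl (Set.finite_singleton _)⟩ : 𝒜) ≤ bot :=
      (hglb.2 hqlb).trans (hlub.2 hub)
    exact Set.notMem_empty p (this rfl)
end

section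
/- Let $P$ be a poset and $F \subseteq P^P$. If a net $(x_\gamma)_{\gamma\in\Gamma}$ in $P$ $FO_2$-converges to $x \in P$ (i.e., $(f(x_\gamma))$ $O_2$-converges to $f(x)$ for every $f \in F$), then $(x_\gamma)$ has a subnet that $FO_1$-converges to $x$ (i.e., $(f$ of the subnet$)$ $O_1$-converges to $f(x)$ for every $f \in F$). -/
/-- A bundled nonempty directed preordered index type (for subnets). -/
structure DirectedIndex : Type (u + 1) where
  carrier : Type u
  [pre : Preorder carrier]
  [nonempty : Nonempty carrier]
  [directed : IsDirected carrier (· ≤ ·)]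

attribute [instance] DirectedIndex.pre DirectedIndex.nonempty DirectedIndex.directed

universe u v

theorem fo2_subnet_fo1 {P : Type u} {Γ : Type v} [PartialOrder P] [Preorder Γ]
    [Nonempty Γ] [IsDirected Γ (· ≤ ·)]
    (F : Set (P → P)) (x : Γ → P) (l : P)
    (h : ∀ f ∈ F, O2Conv (fun γ => f (x γ)) (f l)) :
    ∃ (Λ : DirectedIndex.{max u v}) (φ : Λ.carrier → Γ),
      Monotone φ ∧ (∀ γ : Γ, ∃ lam, γ ≤ φ lam) ∧
      ∀ f ∈ F, O1Conv (fun lam => f (x (φ lam))) (f l) := by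
  classical
  choose M N hMne hMdir hNne hNdir hMl hNl hev using fun f : F => h f f.2
  choose m0 hm0 using hMne
  choose n0 hn0 using hNne
  -- the index type
  let Pred : Γ × (F → P × P) × Set F → Prop := fun p =>
    p.2.2.Finite ∧ (∀ f, (p.2.1 f).1 ∈ M f ∧ (p.2.1 f).2 ∈ N f) ∧
      ∀ f ∈ p.2.2, (p.2.1 f).1 ≤ (f : P → P) (x p.1) ∧ (f : P → P) (x p.1) ≤ (p.2.1 f).2
  let C := { p : Γ × (F → P × P) × Set F // Pred p }
  let cle : C → C → Prop := fun a b => a.1.1 ≤ b.1.1 ∧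
    (∀ f, (a.1.2.1 f).1 ≤ (b.1.2.1 f).1 ∧ (b.1.2.1 f).2 ≤ (a.1.2.1 f).2) ∧
    a.1.2.2 ⊆ b.1.2.2
  let pre : Preorder C :=
    { le := cle
      lt := fun a b => cle a b ∧ ¬ cle b a
      lt_iff_le_not_ge := fun a b => Iff.rfl
      le_refl := fun a => ⟨le_refl _, fun f => ⟨le_refl _, le_refl _⟩, subset_rfl⟩
      le_trans := fun a b c hab hbc =>
        ⟨hab.1.trans hbc.1,
         fun f => ⟨(hab.2.1 f).1.trans (hbc.2.1 f).1, (hbc.2.1 f).2.trans (hab.2.1 f).2⟩,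
         hab.2.2.trans hbc.2.2⟩ }
  -- a base element with prescribed Γ-component
  have basePred : ∀ γ : Γ, Pred ⟨γ, fun f => (m0 f, n0 f), ∅⟩ :=
    fun γ => ⟨Set.finite_empty, fun f => ⟨hm0 f, hn0 f⟩, fun f hf => absurd hf (Set.notMem_empty f)⟩
  let base : Γ → C := fun γ => ⟨⟨γ, fun f => (m0 f, n0 f), ∅⟩, basePred γ⟩
  have hne : Nonempty C := ⟨base (Classical.arbitrary Γ)⟩
  -- directedness
  have hdir : @IsDirected C (fun a b => pre.le a b) := by
    constructor
    intro a b
    have hg' : ∀ f : F, ∃ mn : P × P, mn.1 ∈ M f ∧ mn.2 ∈ N f ∧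
        (a.1.2.1 f).1 ≤ mn.1 ∧ (b.1.2.1 f).1 ≤ mn.1 ∧
        mn.2 ≤ (a.1.2.1 f).2 ∧ mn.2 ≤ (b.1.2.1 f).2 := by
      intro f
      obtain ⟨m, hm, ham, hbm⟩ := hMdir f _ (a.2.2.1 f).1 _ (b.2.2.1 f).1
      obtain ⟨n, hn, han, hbn⟩ := hNdir f _ (a.2.2.1 f).2 _ (b.2.2.1 f).2
      exact ⟨(m, n), hm, hn, ham, hbm, han, hbn⟩
    choose g' hg'M hg'N hg'a hg'b hg'an hg'bn using hg'
    set S : Set F := a.1.2.2 ∪ b.1.2.2 with hS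
    have hSfin : S.Finite := a.2.1.union b.2.1
    have ht : ∀ f : F, ∃ γ₀, ∀ γ, γ₀ ≤ γ →
        (g' f).1 ≤ (f : P → P) (x γ) ∧ (f : P → P) (x γ) ≤ (g' f).2 :=
      fun f => hev f _ (hg'M f) _ (hg'N f)
    choose t ht using ht
    obtain ⟨γ₁, hγ₁⟩ := (((hSfin.image t).insert a.1.1).insert b.1.1).exists_le
    have hγa : a.1.1 ≤ γ₁ := hγ₁ _ (Set.mem_insert_iff.2 (Or.inr (Set.mem_insert _ _)))
    have hγb : b.1.1 ≤ γ₁ := hγ₁ _ (Set.mem_insert _ _)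
    have hγt : ∀ f ∈ S, t f ≤ γ₁ := fun f hf =>
      hγ₁ _ (Set.mem_insert_iff.2 (Or.inr (Set.mem_insert_iff.2 (Or.inr ⟨f, hf, rfl⟩))))
    refine ⟨⟨⟨γ₁, g', S⟩, hSfin, fun f => ⟨hg'M f, hg'N f⟩, fun f hf => ht f γ₁ (hγt f hf)⟩,
      ⟨hγa, fun f => ⟨hg'a f, hg'an f⟩, Set.subset_union_left⟩,
      ⟨hγb, fun f => ⟨hg'b f, hg'bn f⟩, Set.subset_union_right⟩⟩
  refine ⟨@DirectedIndex.mk C pre hne hdir, fun lam => lam.1.1,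
    fun a b hab => hab.1, fun γ => ⟨base γ, le_refl γ⟩, ?_⟩
  intro f hf
  set fF : F := ⟨f, hf⟩ with hfF
  refine ⟨fun lam => (lam.1.2.1 fF).1, fun lam => (lam.1.2.1 fF).2,
    fun a b hab => (hab.2.1 fF).1, fun a b hab => (hab.2.1 fF).2, ?_, ?_, ?_⟩
  · -- IsLUB
    constructor
    · rintro _ ⟨lam, rfl⟩
      exact (hMl fF).1 (lam.2.2.1 fF).1
    · intro c hc
      refine (hMl fF).2 ?_
      rintro m hm
      have hPred : Pred ⟨Classical.arbitrary Γ,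
          fun f' => if f' = fF then (m, n0 fF) else (m0 f', n0 f'), ∅⟩ := by
        refine ⟨Set.finite_empty, fun f' => ?_, fun f' hf' => absurd hf' (Set.notMem_empty f')⟩
        by_cases hff : f' = fF
        · subst hff; simp only [if_pos rfl]; exact ⟨hm, hn0 fF⟩
        · simp only [if_neg hff]; exact ⟨hm0 f', hn0 f'⟩
      have : m ∈ Set.range (fun lam : C => (lam.1.2.1 fF).1) :=
        ⟨⟨_, hPred⟩, by simp⟩
      exact hc this
  · -- IsGLB
    constructor
    · rintro _ ⟨lam, rfl⟩
      exact (hNl fF).1 (lam.2.2.1 fF).2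
    · intro c hc
      refine (hNl fF).2 ?_
      rintro n hn
      have hPred : Pred ⟨Classical.arbitrary Γ,
          fun f' => if f' = fF then (m0 fF, n) else (m0 f', n0 f'), ∅⟩ := by
        refine ⟨Set.finite_empty, fun f' => ?_, fun f' hf' => absurd hf' (Set.notMem_empty f')⟩
        by_cases hff : f' = fF
        · subst hff; simp only [if_pos rfl]; exact ⟨hm0 fF, hn⟩
        · simp only [if_neg hff]; exact ⟨hm0 f', hn0 f'⟩
      have : n ∈ Set.range (fun lam : C => (lam.1.2.1 fF).2) :=
        ⟨⟨_, hPred⟩, by simp⟩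
      exact hc this
  · -- EvAtTop
    obtain ⟨γ₀, hγ₀⟩ := hev fF (m0 fF) (hm0 fF) (n0 fF) (hn0 fF)
    have hPred : Pred ⟨γ₀, fun f' => (m0 f', n0 f'), {fF}⟩ := by
      refine ⟨Set.finite_singleton _, fun f' => ⟨hm0 f', hn0 f'⟩, ?_⟩
      rintro f' hf'
      rw [Set.mem_singleton_iff] at hf'
      subst hf'
      exact hγ₀ γ₀ (le_refl _)
    refine ⟨⟨_, hPred⟩, fun lam hlam => ?_⟩
    exact lam.2.2.2 fF (hlam.2.2 (Set.mem_singleton fF))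
end

section
/- In a poset $P$, every net that $O_2$-converges to a point $x$ admits a subnet that $O_1$-converges to $x$. -/
universe u v

/-- The index type for the subnet: triples `(m, n, γ)` with `m ∈ M`, `n ∈ N`,
`m ≤ x γ ≤ n`. -/
def O2Index {P : Type u} {Γ : Type v} [PartialOrder P] [Preorder Γ]
    (x : Γ → P) (M N : Set P) : Type (max u v) :=
  {p : P × P × Γ // p.1 ∈ M ∧ p.2.1 ∈ N ∧ p.1 ≤ x p.2.2 ∧ x p.2.2 ≤ p.2.1}

instance {P : Type u} {Γ : Type v} [PartialOrder P] [Preorder Γ]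
    (x : Γ → P) (M N : Set P) : Preorder (O2Index x M N) where
  le a b := a.1.1 ≤ b.1.1 ∧ b.1.2.1 ≤ a.1.2.1 ∧ a.1.2.2 ≤ b.1.2.2
  le_refl a := ⟨le_refl _, le_refl _, le_refl _⟩
  le_trans a b c h1 h2 := ⟨h1.1.trans h2.1, h2.2.1.trans h1.2.1, h1.2.2.trans h2.2.2⟩

theorem o2_subnet_o1 {P : Type u} {Γ : Type v} [PartialOrder P] [Preorder Γ]
    [Nonempty Γ] [IsDirected Γ (· ≤ ·)]
    (x : Γ → P) (l : P) (h : O2Conv x l) :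
    ∃ (Λ : DirectedIndex.{max u v}) (φ : Λ.carrier → Γ),
      Monotone φ ∧ (∀ γ : Γ, ∃ lam, γ ≤ φ lam) ∧
      O1Conv (fun lam => x (φ lam)) l := by
  obtain ⟨M, N, hMne, hMdir, hNne, hNdir, hlub, hglb, hev⟩ := h
  -- every pair (m,n) ∈ M × N gives an element of the index type
  have mem_ind : ∀ m ∈ M, ∀ n ∈ N, ∀ γ₀ : Γ,
      ∃ γ : Γ, γ₀ ≤ γ ∧ m ≤ x γ ∧ x γ ≤ n := by
    intro m hm n hn γ₀
    obtain ⟨γ₁, hγ₁⟩ := hev m hm n hn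
    obtain ⟨γ, h0, h1⟩ := directed_of (· ≤ ·) γ₀ γ₁
    exact ⟨γ, h0, hγ₁ γ h1⟩
  obtain ⟨m₀, hm₀⟩ := hMne
  obtain ⟨n₀, hn₀⟩ := hNne
  have hne : Nonempty (O2Index x M N) := by
    obtain ⟨γ, -, h1, h2⟩ := mem_ind m₀ hm₀ n₀ hn₀ (Classical.arbitrary Γ)
    exact ⟨⟨(m₀, n₀, γ), hm₀, hn₀, h1, h2⟩⟩
  have hdir : IsDirected (O2Index x M N) (· ≤ ·) := by
    constructor
    rintro ⟨⟨m, n, γ⟩, hm, hn, h1, h2⟩ ⟨⟨m', n', γ'⟩, hm', hn', h1', h2'⟩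
    obtain ⟨m'', hm'', hmm1, hmm2⟩ := hMdir m hm m' hm'
    obtain ⟨n'', hn'', hnn1, hnn2⟩ := hNdir n hn n' hn'
    obtain ⟨γ₁, hγa, hγb⟩ := directed_of (· ≤ ·) γ γ'
    obtain ⟨γ'', hγc, hx1, hx2⟩ := mem_ind m'' hm'' n'' hn'' γ₁
    exact ⟨⟨(m'', n'', γ''), hm'', hn'', hx1, hx2⟩,
      ⟨hmm1, hnn1, hγa.trans hγc⟩, ⟨hmm2, hnn2, hγb.trans hγc⟩⟩
  refine ⟨@DirectedIndex.mk (O2Index x M N) _ hne hdir, fun p => p.1.2.2,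
    fun a b hab => hab.2.2, ?_, ?_⟩
  · intro γ
    obtain ⟨γ', hγ', h1, h2⟩ := mem_ind m₀ hm₀ n₀ hn₀ γ
    exact ⟨⟨(m₀, n₀, γ'), hm₀, hn₀, h1, h2⟩, hγ'⟩
  · refine ⟨fun p => p.1.1, fun p => p.1.2.1,
      fun a b hab => hab.1, fun a b hab => hab.2.1, ?_, ?_, ?_⟩
    · have : Set.range (fun p : O2Index x M N => p.1.1) = M := by
        ext m
        constructor
        · rintro ⟨⟨⟨m', n', γ'⟩, hm', -, -⟩, rfl⟩; exact hm'
        · intro hm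
          obtain ⟨γ, -, h1, h2⟩ := mem_ind m hm n₀ hn₀ (Classical.arbitrary Γ)
          exact ⟨⟨(m, n₀, γ), hm, hn₀, h1, h2⟩, rfl⟩
      rwa [this]
    · have : Set.range (fun p : O2Index x M N => p.1.2.1) = N := by
        ext n
        constructor
        · rintro ⟨⟨⟨m', n', γ'⟩, -, hn', -⟩, rfl⟩; exact hn'
        · intro hn
          obtain ⟨γ, -, h1, h2⟩ := mem_ind m₀ hm₀ n hn (Classical.arbitrary Γ)
          exact ⟨⟨(m₀, n, γ), hm₀, hn, h1, h2⟩, rfl⟩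
      rwa [this]
    · exact ⟨Classical.arbitrary _, fun p _ => ⟨p.2.2.2.1, p.2.2.2.2⟩⟩
end

section
/- Let $P$ be a poset, $F \subseteq P^P$, and $X \subseteq P$. Define $\bar{X}^{FO_i}$ to be the set of $x \in P$ such that there is a net in $X$ which $FO_i$-converges to $x$, for $i = 1,2$. Then $\bar{X}^{FO_1} = \bar{X}^{FO_2}$. In particular, a subset $X \subseteq P$ is $FO_1$-closed if and only if it is $FO_2$-closed. -/
universe u

/-- The $FO_1$-closure of a subset of a poset. -/
def FO1Closure {P : Type u} [PartialOrder P] (F : Set (P → P)) (X : Set P) : Set P :=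
  {x | ∃ (Λ : DirectedIndex.{u}) (s : Λ.carrier → P),
    (∀ γ, s γ ∈ X) ∧ ∀ f ∈ F, O1Conv (fun γ => f (s γ)) (f x)}

/-- The $FO_2$-closure of a subset of a poset. -/
def FO2Closure {P : Type u} [PartialOrder P] (F : Set (P → P)) (X : Set P) : Set P :=
  {x | ∃ (Λ : DirectedIndex.{u}) (s : Λ.carrier → P),
    (∀ γ, s γ ∈ X) ∧ ∀ f ∈ F, O2Conv (fun γ => f (s γ)) (f x)}

section AuxLemmas

/-- An `O₁`-convergent net (over a nonempty directed index) is `O₂`-convergent. -/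
theorem o1Conv_to_o2Conv {P : Type*} {Γ : Type*} [PartialOrder P] [Preorder Γ]
    [Nonempty Γ] [IsDirected Γ (· ≤ ·)] {x : Γ → P} {l : P}
    (h : O1Conv x l) : O2Conv x l := by
  obtain ⟨y, z, hy, hz, hlub, hglb, γ₀, hγ₀⟩ := h
  refine ⟨Set.range y, Set.range z, Set.range_nonempty _, ?_, Set.range_nonempty _, ?_,
    hlub, hglb, ?_⟩
  · rintro _ ⟨a, rfl⟩ _ ⟨b, rfl⟩
    obtain ⟨c, hc1, hc2⟩ := exists_ge_ge a b
    exact ⟨y c, ⟨c, rfl⟩, hy hc1, hy hc2⟩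
  · rintro _ ⟨a, rfl⟩ _ ⟨b, rfl⟩
    obtain ⟨c, hc1, hc2⟩ := exists_ge_ge a b
    exact ⟨z c, ⟨c, rfl⟩, hz hc1, hz hc2⟩
  · rintro _ ⟨a, rfl⟩ _ ⟨b, rfl⟩
    obtain ⟨c, hc1, hc2⟩ := exists_ge_ge a b
    obtain ⟨d, hd1, hd2⟩ := exists_ge_ge c γ₀
    refine ⟨d, fun γ hγ => ?_⟩
    have h1 := hγ₀ γ (hd2.trans hγ)
    exact ⟨(hy (hc1.trans (hd1.trans hγ))).trans h1.1,
      h1.2.trans (hz (hc2.trans (hd1.trans hγ)))⟩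

/-- Finitely many eventual conditions (plus being above two given points) can be met
simultaneously in a directed index. -/
theorem evAtTop_finite {Γ : Type*} [Preorder Γ] [IsDirected Γ (· ≤ ·)]
    {ι : Type*} {T : Set ι} (hT : T.Finite) {p : ι → Γ → Prop}
    (h : ∀ i ∈ T, EvAtTop (p i)) (a b : Γ) :
    ∃ γ, a ≤ γ ∧ b ≤ γ ∧ ∀ i ∈ T, p i γ := by
  classical
  haveI : Nonempty Γ := ⟨a⟩
  have hch : ∀ i : ι, ∃ γ₀, i ∈ T → ∀ γ, γ₀ ≤ γ → p i γ := by
    intro i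
    by_cases hi : i ∈ T
    · obtain ⟨γ₀, hγ₀⟩ := h i hi
      exact ⟨γ₀, fun _ => hγ₀⟩
    · exact ⟨a, fun h' => absurd h' hi⟩
  choose γ₀ hγ₀ using hch
  obtain ⟨c, hc⟩ := (insert a (insert b (hT.toFinset.image γ₀))).exists_le
  refine ⟨c, hc a (by simp), hc b (by simp), fun i hi => hγ₀ i hi c (hc _ ?_)⟩
  simp only [Finset.mem_insert, Finset.mem_image]
  exact Or.inr (Or.inr ⟨i, hT.mem_toFinset.2 hi, rfl⟩)

end AuxLemmas

section Construction

variable {P : Type u} [PartialOrder P]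

/-- The auxiliary index type used to turn `FO₂`-convergence into `FO₁`-convergence:
pairs of an index `γ` and a finitely supported choice of interval bounds that are
valid at `γ`. -/
def FOIdx (Γ : Type u) (s : Γ → P) (F : Set (P → P))
    (M N : (P → P) → Set P) (m₀ n₀ : (P → P) → P) : Type u :=
  {q : Γ × ((P → P) → Option (P × P)) //
    {g | q.2 g ≠ none}.Finite ∧
    ∀ g m n, q.2 g = some (m, n) →
      g ∈ F ∧ m ∈ M g ∧ n ∈ N g ∧ m₀ g ≤ m ∧ n ≤ n₀ g ∧
        m ≤ g (s q.1) ∧ g (s q.1) ≤ n}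

variable {Γ : Type u} [Preorder Γ] {s : Γ → P} {F : Set (P → P)}
  {M N : (P → P) → Set P} {m₀ n₀ : (P → P) → P}

instance : Preorder (FOIdx Γ s F M N m₀ n₀) where
  le a b := a.1.1 ≤ b.1.1 ∧ ∀ g m n, a.1.2 g = some (m, n) →
    ∃ m' n', b.1.2 g = some (m', n') ∧ m ≤ m' ∧ n' ≤ n
  le_refl a := ⟨le_refl _, fun g m n h => ⟨m, n, h, le_refl _, le_refl _⟩⟩
  le_trans a b c hab hbc := by
    refine ⟨hab.1.trans hbc.1, fun g m n h => ?_⟩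
    obtain ⟨m', n', h', hm, hn⟩ := hab.2 g m n h
    obtain ⟨m'', n'', h'', hm', hn'⟩ := hbc.2 g m' n' h'
    exact ⟨m'', n'', h'', hm.trans hm', hn'.trans hn⟩

theorem foIdx_le_def {a b : FOIdx Γ s F M N m₀ n₀} :
    a ≤ b ↔ a.1.1 ≤ b.1.1 ∧ ∀ g m n, a.1.2 g = some (m, n) →
      ∃ m' n', b.1.2 g = some (m', n') ∧ m ≤ m' ∧ n' ≤ n := Iff.rfl

instance [Nonempty Γ] : Nonempty (FOIdx Γ s F M N m₀ n₀) :=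
  ⟨⟨(Classical.arbitrary Γ, fun _ => none), by simp, fun _ _ _ h => nomatch h⟩⟩

theorem foIdx_directed [Nonempty Γ] [IsDirected Γ (· ≤ ·)]
    (hMdir : ∀ g ∈ F, DirectedOn (· ≤ ·) (M g))
    (hNdir : ∀ g ∈ F, DirectedOn (· ≥ ·) (N g))
    (hev : ∀ g ∈ F, ∀ m ∈ M g, ∀ n ∈ N g,
      EvAtTop (fun γ => m ≤ g (s γ) ∧ g (s γ) ≤ n)) :
    IsDirected (FOIdx Γ s F M N m₀ n₀) (· ≤ ·) := by
  classical
  constructor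
  rintro ⟨⟨γ₁, u₁⟩, hfin₁, hc₁⟩ ⟨⟨γ₂, u₂⟩, hfin₂, hc₂⟩
  -- merge the two bound assignments
  set pick : (P → P) → P → P → P := fun g c d =>
    if h : ∃ e ∈ M g, c ≤ e ∧ d ≤ e then h.choose else c with hpick
  set pickN : (P → P) → P → P → P := fun g c d =>
    if h : ∃ e ∈ N g, e ≤ c ∧ e ≤ d then h.choose else c with hpickN
  set u : (P → P) → Option (P × P) := fun g =>
    (u₁ g).elim (u₂ g) (fun p => (u₂ g).elim (some p)
      (fun q => some (pick g p.1 q.1, pickN g p.2 q.2))) with hu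
  -- key facts about the merged assignment
  have key : ∀ g m n, u g = some (m, n) →
      (g ∈ F ∧ m ∈ M g ∧ n ∈ N g ∧ m₀ g ≤ m ∧ n ≤ n₀ g) ∧
      (∀ m₁ n₁, u₁ g = some (m₁, n₁) → m₁ ≤ m ∧ n ≤ n₁) ∧
      (∀ m₂ n₂, u₂ g = some (m₂, n₂) → m₂ ≤ m ∧ n ≤ n₂) := by
    intro g m n hg
    rcases h1 : u₁ g with _ | ⟨m₁, n₁⟩ <;> rcases h2 : u₂ g with _ | ⟨m₂, n₂⟩ <;>
      simp only [hu, h1, h2, Option.elim] at hg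
    · exact absurd hg (by simp)
    · obtain ⟨rfl, rfl⟩ : m₂ = m ∧ n₂ = n := by simpa using hg
      obtain ⟨hgF, hm, hn, hm0, hn0, -, -⟩ := hc₂ g m₂ n₂ h2
      refine ⟨⟨hgF, hm, hn, hm0, hn0⟩, fun a b h => ?_, fun a b h => ?_⟩
      · exact absurd h (by simp)
      · simp only [Option.some.injEq, Prod.mk.injEq] at h
        obtain ⟨rfl, rfl⟩ := h
        exact ⟨le_refl _, le_refl _⟩
    · obtain ⟨rfl, rfl⟩ : m₁ = m ∧ n₁ = n := by simpa using hg
      obtain ⟨hgF, hm, hn, hm0, hn0, -, -⟩ := hc₁ g m₁ n₁ h1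
      refine ⟨⟨hgF, hm, hn, hm0, hn0⟩, fun a b h => ?_, fun a b h => ?_⟩
      · simp only [Option.some.injEq, Prod.mk.injEq] at h
        obtain ⟨rfl, rfl⟩ := h
        exact ⟨le_refl _, le_refl _⟩
      · exact absurd h (by simp)
    · obtain ⟨hgF, hm1, hn1, hm01, hn01, -, -⟩ := hc₁ g m₁ n₁ h1
      obtain ⟨-, hm2, hn2, -, -, -, -⟩ := hc₂ g m₂ n₂ h2
      have hM : ∃ e ∈ M g, m₁ ≤ e ∧ m₂ ≤ e := by
        obtain ⟨e, he, ha, hb⟩ := hMdir g hgF m₁ hm1 m₂ hm2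
        exact ⟨e, he, ha, hb⟩
      have hN : ∃ e ∈ N g, e ≤ n₁ ∧ e ≤ n₂ := by
        obtain ⟨e, he, ha, hb⟩ := hNdir g hgF n₁ hn1 n₂ hn2
        exact ⟨e, he, ha, hb⟩
      have hpickv : pick g m₁ m₂ ∈ M g ∧ m₁ ≤ pick g m₁ m₂ ∧ m₂ ≤ pick g m₁ m₂ := by
        rw [hpick]; simp only [dif_pos hM]
        exact ⟨hM.choose_spec.1, hM.choose_spec.2.1, hM.choose_spec.2.2⟩
      have hpickNv : pickN g n₁ n₂ ∈ N g ∧ pickN g n₁ n₂ ≤ n₁ ∧ pickN g n₁ n₂ ≤ n₂ := by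
        rw [hpickN]; simp only [dif_pos hN]
        exact ⟨hN.choose_spec.1, hN.choose_spec.2.1, hN.choose_spec.2.2⟩
      obtain ⟨rfl, rfl⟩ : pick g m₁ m₂ = m ∧ pickN g n₁ n₂ = n := by simpa using hg
      refine ⟨⟨hgF, hpickv.1, hpickNv.1, hm01.trans hpickv.2.1, hpickNv.2.1.trans hn01⟩,
        fun a b h => ?_, fun a b h => ?_⟩
      · simp only [Option.some.injEq, Prod.mk.injEq] at h
        obtain ⟨rfl, rfl⟩ := h
        exact ⟨hpickv.2.1, hpickNv.2.1⟩
      · simp only [Option.some.injEq, Prod.mk.injEq] at h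
        obtain ⟨rfl, rfl⟩ := h
        exact ⟨hpickv.2.2, hpickNv.2.2⟩
  have hsupp : {g | u g ≠ none} ⊆ {g | u₁ g ≠ none} ∪ {g | u₂ g ≠ none} := by
    intro g hg
    by_contra hcon
    simp only [Set.mem_union, Set.mem_setOf_eq, not_or, not_not] at hcon
    apply hg
    simp [hu, hcon.1, hcon.2, Option.elim]
  have hfin : {g | u g ≠ none}.Finite := Set.Finite.subset (hfin₁.union hfin₂) hsupp
  -- find a common index where all merged constraints hold
  have hev' : ∀ g ∈ {g | u g ≠ none},
      EvAtTop (fun γ => ∀ m n, u g = some (m, n) → m ≤ g (s γ) ∧ g (s γ) ≤ n) := by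
    intro g hg
    rcases hval : u g with _ | ⟨m, n⟩
    · exact absurd hval hg
    · obtain ⟨⟨hgF, hm, hn, -, -⟩, -, -⟩ := key g m n hval
      obtain ⟨γ₀, hγ₀⟩ := hev g hgF m hm n hn
      refine ⟨γ₀, fun γ hγ m' n' hval' => ?_⟩
      obtain ⟨rfl, rfl⟩ : m = m' ∧ n = n' := by simpa using hval'
      exact hγ₀ γ hγ
  obtain ⟨γ, hγ1, hγ2, hγ⟩ := evAtTop_finite hfin hev' γ₁ γ₂
  refine ⟨⟨(γ, u), hfin, fun g m n hval => ?_⟩, ?_, ?_⟩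
  · obtain ⟨⟨hgF, hm, hn, hm₀, hn₀⟩, -, -⟩ := key g m n hval
    have hval' : u g = some (m, n) := hval
    have := hγ g (by simp [hval']) m n hval'
    exact ⟨hgF, hm, hn, hm₀, hn₀, this.1, this.2⟩
  · refine ⟨hγ1, fun g m n h1 => ?_⟩
    have h1' : u₁ g = some (m, n) := h1
    obtain ⟨⟨m', n'⟩, hval⟩ : ∃ p, u g = some p := by
      rcases h2 : u₂ g with _ | q
      · exact ⟨(m, n), by simp only [hu]; rw [h1', h2]; rfl⟩
      · exact ⟨_, by simp only [hu]; rw [h1', h2]; rfl⟩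
    obtain ⟨-, hcmp, -⟩ := key g m' n' hval
    obtain ⟨h₁, h₂⟩ := hcmp m n h1'
    exact ⟨m', n', hval, h₁, h₂⟩
  · refine ⟨hγ2, fun g m n h2 => ?_⟩
    have h2' : u₂ g = some (m, n) := h2
    obtain ⟨⟨m', n'⟩, hval⟩ : ∃ p, u g = some p := by
      rcases h1 : u₁ g with _ | q
      · exact ⟨(m, n), by simp only [hu]; rw [h1, h2']; rfl⟩
      · exact ⟨_, by simp only [hu]; rw [h1, h2']; rfl⟩
    obtain ⟨-, -, hcmp⟩ := key g m' n' hval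
    obtain ⟨h₁, h₂⟩ := hcmp m n h2'
    exact ⟨m', n', hval, h₁, h₂⟩

end Construction

theorem fo2_subset_fo1 {P : Type u} [PartialOrder P] (F : Set (P → P)) (X : Set P) :
    FO2Closure F X ⊆ FO1Closure F X := by
  classical
  rintro x ⟨Λ, s, hs, h2⟩
  -- extract O₂-data for each f ∈ F, as total functions
  have h2' : ∀ f : P → P, ∃ M N : Set P, f ∈ F →
      (M.Nonempty ∧ DirectedOn (· ≤ ·) M ∧ N.Nonempty ∧ DirectedOn (· ≥ ·) N ∧
        IsLUB M (f x) ∧ IsGLB N (f x) ∧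
        ∀ m ∈ M, ∀ n ∈ N, EvAtTop (fun γ => m ≤ f (s γ) ∧ f (s γ) ≤ n)) := by
    intro f
    by_cases hf : f ∈ F
    · obtain ⟨M, N, h⟩ := h2 f hf
      exact ⟨M, N, fun _ => h⟩
    · exact ⟨∅, ∅, fun h' => absurd h' hf⟩
  choose M N hMN using h2'
  have hm₀ : ∀ f : P → P, ∃ m, f ∈ F → m ∈ M f := by
    intro f
    by_cases hf : f ∈ F
    · obtain ⟨m, hm⟩ := (hMN f hf).1
      exact ⟨m, fun _ => hm⟩
    · exact ⟨x, fun h' => absurd h' hf⟩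
  choose m₀ hm₀ using hm₀
  have hn₀ : ∀ f : P → P, ∃ n, f ∈ F → n ∈ N f := by
    intro f
    by_cases hf : f ∈ F
    · obtain ⟨n, hn⟩ := (hMN f hf).2.2.1
      exact ⟨n, fun _ => hn⟩
    · exact ⟨x, fun h' => absurd h' hf⟩
  choose n₀ hn₀ using hn₀
  have hMdir : ∀ g ∈ F, DirectedOn (· ≤ ·) (M g) := fun g hg => (hMN g hg).2.1
  have hNdir : ∀ g ∈ F, DirectedOn (· ≥ ·) (N g) := fun g hg => (hMN g hg).2.2.2.1
  have hev : ∀ g ∈ F, ∀ m ∈ M g, ∀ n ∈ N g,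
      EvAtTop (fun γ => m ≤ g (s γ) ∧ g (s γ) ≤ n) :=
    fun g hg => (hMN g hg).2.2.2.2.2.2
  -- the new index
  haveI hdir := foIdx_directed (s := s) (m₀ := m₀) (n₀ := n₀) hMdir hNdir hev
  refine ⟨@DirectedIndex.mk (FOIdx Λ.carrier s F M N m₀ n₀) _ _ hdir,
    fun δ => s δ.1.1, fun δ => hs δ.1.1, fun f hf => ?_⟩
  -- O₁-convergence of f along the new net
  refine ⟨fun δ => (δ.1.2 f).elim (m₀ f) Prod.fst,
    fun δ => (δ.1.2 f).elim (n₀ f) Prod.snd, ?_, ?_, ?_, ?_, ?_⟩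
  · -- monotone lower net
    rintro δ δ' hle
    rcases h1 : δ.1.2 f with _ | ⟨m, n⟩
    · rcases h2' : δ'.1.2 f with _ | ⟨m', n'⟩
      · simp [h1, h2', Option.elim]
      · simp only [h1, h2', Option.elim]
        exact (δ'.2.2 f m' n' h2').2.2.2.1
    · obtain ⟨m', n', h', hm, hn⟩ := hle.2 f m n h1
      simp only [h1, h', Option.elim]
      exact hm
  · -- antitone upper net
    rintro δ δ' hle
    rcases h1 : δ.1.2 f with _ | ⟨m, n⟩
    · rcases h2' : δ'.1.2 f with _ | ⟨m', n'⟩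
      · simp [h1, h2', Option.elim]
      · simp only [h1, h2', Option.elim]
        exact (δ'.2.2 f m' n' h2').2.2.2.2.1
    · obtain ⟨m', n', h', hm, hn⟩ := hle.2 f m n h1
      simp only [h1, h', Option.elim]
      exact hn
  · -- IsLUB of the range of the lower net
    have hrange : Set.range (fun δ : FOIdx Λ.carrier s F M N m₀ n₀ =>
        (δ.1.2 f).elim (m₀ f) Prod.fst) = {m | m ∈ M f ∧ m₀ f ≤ m} := by
      apply Set.Subset.antisymm
      · rintro _ ⟨δ, rfl⟩
        rcases h1 : δ.1.2 f with _ | ⟨m, n⟩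
        · simp only [h1, Option.elim]
          exact ⟨hm₀ f hf, le_refl _⟩
        · obtain ⟨-, hm, -, hm0, -, -, -⟩ := δ.2.2 f m n h1
          simp only [h1, Option.elim]
          exact ⟨hm, hm0⟩
      · rintro m ⟨hm, hm0⟩
        obtain ⟨γ₀, hγ₀⟩ := hev f hf m hm (n₀ f) (hn₀ f hf)
        refine ⟨⟨(γ₀, fun g => if g = f then some (m, n₀ f) else none), ?_, ?_⟩, ?_⟩
        · exact Set.Finite.subset (Set.finite_singleton f)
            (fun g hg => by by_contra h; simp [h] at hg)
        · intro g m' n' hval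
          by_cases hgf : g = f
          · subst hgf
            simp only [if_pos rfl] at hval
            obtain ⟨rfl, rfl⟩ : m = m' ∧ n₀ g = n' := by simpa using hval
            have := hγ₀ γ₀ (le_refl _)
            exact ⟨hf, hm, hn₀ g hf, hm0, le_refl _, this.1, this.2⟩
          · simp [hgf] at hval
        · simp
    rw [hrange]
    have hlub := (hMN f hf).2.2.2.2.1
    constructor
    · rintro m ⟨hm, -⟩
      exact hlub.1 hm
    · intro b hb
      apply hlub.2
      intro m hm
      obtain ⟨m', hm', h₁, h₂⟩ := hMdir f hf m hm (m₀ f) (hm₀ f hf)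
      exact h₁.trans (hb ⟨hm', h₂⟩)
  · -- IsGLB of the range of the upper net
    have hrange : Set.range (fun δ : FOIdx Λ.carrier s F M N m₀ n₀ =>
        (δ.1.2 f).elim (n₀ f) Prod.snd) = {n | n ∈ N f ∧ n ≤ n₀ f} := by
      apply Set.Subset.antisymm
      · rintro _ ⟨δ, rfl⟩
        rcases h1 : δ.1.2 f with _ | ⟨m, n⟩
        · simp only [h1, Option.elim]
          exact ⟨hn₀ f hf, le_refl _⟩
        · obtain ⟨-, -, hn, -, hn0, -, -⟩ := δ.2.2 f m n h1
          simp only [h1, Option.elim]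
          exact ⟨hn, hn0⟩
      · rintro n ⟨hn, hn0⟩
        obtain ⟨γ₀, hγ₀⟩ := hev f hf (m₀ f) (hm₀ f hf) n hn
        refine ⟨⟨(γ₀, fun g => if g = f then some (m₀ f, n) else none), ?_, ?_⟩, ?_⟩
        · exact Set.Finite.subset (Set.finite_singleton f)
            (fun g hg => by by_contra h; simp [h] at hg)
        · intro g m' n' hval
          by_cases hgf : g = f
          · subst hgf
            simp only [if_pos rfl] at hval
            obtain ⟨rfl, rfl⟩ : m₀ g = m' ∧ n = n' := by simpa using hval
            have := hγ₀ γ₀ (le_refl _)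
            exact ⟨hf, hm₀ g hf, hn, le_refl _, hn0, this.1, this.2⟩
          · simp [hgf] at hval
        · simp
    rw [hrange]
    have hglb := (hMN f hf).2.2.2.2.2.1
    constructor
    · rintro n ⟨hn, -⟩
      exact hglb.1 hn
    · intro b hb
      apply hglb.2
      intro n hn
      obtain ⟨n', hn', h₁, h₂⟩ := hNdir f hf n hn (n₀ f) (hn₀ f hf)
      exact (hb ⟨hn', h₂⟩).trans h₁
  · -- eventual sandwich
    obtain ⟨γ₀, hγ₀⟩ := hev f hf (m₀ f) (hm₀ f hf) (n₀ f) (hn₀ f hf)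
    have h00 := hγ₀ γ₀ (le_refl _)
    refine ⟨⟨(γ₀, fun g => if g = f then some (m₀ f, n₀ f) else none), ?_, ?_⟩,
      fun δ hδ => ?_⟩
    · exact Set.Finite.subset (Set.finite_singleton f)
        (fun g hg => by by_contra h; simp [h] at hg)
    · intro g m' n' hval
      by_cases hgf : g = f
      · subst hgf
        simp only [if_pos rfl] at hval
        obtain ⟨rfl, rfl⟩ : m₀ g = m' ∧ n₀ g = n' := by simpa using hval
        exact ⟨hf, hm₀ g hf, hn₀ g hf, le_refl _, le_refl _, h00.1, h00.2⟩
      · simp [hgf] at hval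
    · obtain ⟨m', n', hval, -, -⟩ := hδ.2 f (m₀ f) (n₀ f) (by simp)
      obtain ⟨-, -, -, -, -, hl, hr⟩ := δ.2.2 f m' n' hval
      simp only [hval, Option.elim]
      exact ⟨hl, hr⟩

theorem fo1Closure_eq_fo2Closure {P : Type u} [PartialOrder P]
    (F : Set (P → P)) (X : Set P) :
    FO1Closure F X = FO2Closure F X ∧
      ((FO1Closure F X ⊆ X) ↔ (FO2Closure F X ⊆ X)) := by
  have heq : FO1Closure F X = FO2Closure F X := by
    apply Set.Subset.antisymm
    · rintro x ⟨Λ, s, hs, h1⟩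
      exact ⟨Λ, s, hs, fun f hf => o1Conv_to_o2Conv (h1 f hf)⟩
    · exact fo2_subset_fo1 F X
  exact ⟨heq, by rw [heq]⟩
end

section
/- In a commutative lattice-ordered group $G$, for all $s, x, y \in G$ and $a \in G_+$: $|f_{s,s+a}(x) - f_{s,s+a}(y)| \le |x-y| \wedge a$, where $f_{s,t}(x) := (x \wedge t) \vee s$. -/
theorem abs_ftt_sub_le {G : Type*} [Lattice G] [AddCommGroup G]
    [CovariantClass G G (· + ·) (· ≤ ·)]
    (s x y a : G) (ha : 0 ≤ a) :
    |((x ⊓ (s + a)) ⊔ s) - ((y ⊓ (s + a)) ⊔ s)| ≤ |x - y| ⊓ a := by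
  have key : ∀ z : G, s ≤ (z ⊓ (s + a)) ⊔ s ∧ (z ⊓ (s + a)) ⊔ s ≤ s + a := fun z =>
    ⟨le_sup_right, sup_le (inf_le_right) (le_add_of_nonneg_right ha)⟩
  refine le_inf ?_ ?_
  · calc |((x ⊓ (s + a)) ⊔ s) - ((y ⊓ (s + a)) ⊔ s)|
        ≤ |(x ⊓ (s + a)) - (y ⊓ (s + a))| := abs_sup_sub_sup_le_abs _ _ _
      _ ≤ |x - y| := abs_inf_sub_inf_le_abs _ _ _
  · rw [abs_le']
    refine ⟨?_, ?_⟩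
    
    · have := sub_le_sub (key x).2 (key y).1
      simpa using this
    · have := sub_le_sub (key y).2 (key x).1
      simpa [neg_sub] using this
end

section
/- In a commutative lattice-ordered group $G$, for all $x, y \in G$ and $a \in G_+$: $|x-y| \wedge a = |f_{y-a,y}(x) - f_{y-a,y}(y)| + |f_{y,y+a}(x) - f_{y,y+a}(y)|$, where $f_{s,t}(z) := (z \wedge t) \vee s$. -/
theorem abs_inf_eq_sum_of_truncations {G : Type*} [Lattice G] [AddCommGroup G]
    [CovariantClass G G (· + ·) (· ≤ ·)]
    (x y a : G) (ha : 0 ≤ a) :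
    |x - y| ⊓ a =
      |((x ⊓ y) ⊔ (y - a)) - ((y ⊓ y) ⊔ (y - a))| +
      |((x ⊓ (y + a)) ⊔ y) - ((y ⊓ (y + a)) ⊔ y)| := by
  letI : DistribLattice G := AddCommGroup.toDistribLattice G
  have h1 : (y ⊓ y) ⊔ (y - a) = y := by
    rw [inf_idem, sup_eq_left]
    exact sub_le_self y ha
  have h2 : (y ⊓ (y + a)) ⊔ y = y := by
    rw [inf_eq_left.2 (le_add_of_nonneg_right ha), sup_idem]
  rw [h1, h2]
  set u := x - y with hu
  have hp : ((x ⊓ (y + a)) ⊔ y) - y = u⁺ ⊓ a := by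
    have h : (x ⊓ (y + a)) ⊔ y = ((u ⊓ a) ⊔ 0) + y := by
      rw [sup_add, inf_add, hu, sub_add_cancel, zero_add, add_comm a y]
    rw [h, add_sub_cancel_right, sup_inf_right, sup_eq_left.2 ha, ← posPart_def]
  have hn : ((x ⊓ y) ⊔ (y - a)) - y = -(u⁻ ⊓ a) := by
    have h : (x ⊓ y) ⊔ (y - a) = ((u ⊓ 0) ⊔ (-a)) + y := by
      rw [sup_add, inf_add, hu, sub_add_cancel, zero_add, sub_eq_neg_add, add_comm]
    have h' : -(u⁻ ⊓ a) = (u ⊓ 0) ⊔ (-a) := by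
      rw [neg_inf, negPart_def, neg_sup, neg_neg, neg_zero]
    rw [h, add_sub_cancel_right, h']
  rw [hp, hn, abs_neg, abs_of_nonneg (le_inf (negPart_nonneg u) ha),
    abs_of_nonneg (le_inf (posPart_nonneg u) ha)]
  have hd : (u⁻ ⊓ a) ⊓ (u⁺ ⊓ a) = 0 := by
    apply le_antisymm
    · calc (u⁻ ⊓ a) ⊓ (u⁺ ⊓ a) ≤ u⁻ ⊓ u⁺ :=
            inf_le_inf inf_le_left inf_le_left
        _ = 0 := by rw [inf_comm, posPart_inf_negPart_eq_zero]
    · exact le_inf (le_inf (negPart_nonneg u) ha) (le_inf (posPart_nonneg u) ha)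
  have hsum : (u⁻ ⊓ a) + (u⁺ ⊓ a) = (u⁻ ⊓ a) ⊔ (u⁺ ⊓ a) := by
    rw [← inf_add_sup, hd, zero_add]
  have habs : u⁻ ⊔ u⁺ = |u| := by
    have h := inf_add_sup u⁻ u⁺
    rw [inf_comm, posPart_inf_negPart_eq_zero, zero_add] at h
    rw [h, negPart_add_posPart]
  rw [hsum, ← inf_sup_right, habs]
end

section
/- Let $(G,+)$ be a commutative $\ell$-group, $A$ a solid subgroup of $G$, and $F := \{f_{s,t} : s,t \in G,\ t-s \in A_+\}$ where $f_{s,t}(x) = (x \wedge t) \vee s$. Then for $i \in \{1,2\}$, a net $(x_\gamma)$ $\mathfrak{u}_A O_i$-converges to $x$ (i.e., $|x_\gamma - x| \wedge a \to 0$ in $O_i$-convergence for every $a \in A_+$) if and only if it $FO_i$-converges to $x$ (i.e., $f(x_\gamma) \to f(x)$ in $O_i$-convergence for every $f \in F$). -/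
section Helpers

variable {G : Type*} [Lattice G] [AddCommGroup G] [CovariantClass G G (· + ·) (· ≤ ·)]

/-- Key inequality 1: truncations are contractions bounded by `t - s`. -/
lemma key1 {s t : G} (hst : s ≤ t) (x y : G) :
    |((x ⊓ t) ⊔ s) - ((y ⊓ t) ⊔ s)| ≤ |x - y| ⊓ (t - s) := by
  refine le_inf ((abs_sup_sub_sup_le_abs _ _ _).trans (abs_inf_sub_inf_le_abs _ _ _)) ?_
  have hxt : (x ⊓ t) ⊔ s ≤ t := sup_le (inf_le_right) hst
  have hyt : (y ⊓ t) ⊔ s ≤ t := sup_le (inf_le_right) hst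
  refine abs_le'.2 ⟨sub_le_sub hxt le_sup_right, ?_⟩
  rw [neg_sub]
  exact sub_le_sub hyt le_sup_right

lemma inf_add_ineq {u v w : G} (hu : 0 ≤ u) (hv : 0 ≤ v) (hw : 0 ≤ w) :
    (u + v) ⊓ w ≤ (u ⊓ w) + (v ⊓ w) := by
  rw [add_inf v w (u ⊓ w), inf_add u w v, inf_add u w w]
  refine le_inf (le_inf inf_le_left ?_) (le_inf ?_ ?_)
  · exact inf_le_right.trans (le_add_of_nonneg_right hv)
  · exact inf_le_right.trans (le_add_of_nonneg_left hu)
  · exact inf_le_right.trans (le_add_of_nonneg_left hw)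

/-- Key inequality 2. -/
lemma key2 {a : G} (ha : 0 ≤ a) (x l : G) :
    |x - l| ⊓ a ≤ |((x ⊓ l) ⊔ (l - a)) - l| + |((x ⊓ (l + a)) ⊔ l) - l| := by
  letI : DistribLattice G := AddCommGroup.toDistribLattice G
  have h1 : ((x ⊓ l) ⊔ (l - a)) - l ≤ 0 := by
    rw [sub_nonpos]
    exact sup_le inf_le_right (sub_le_self l ha)
  have h2 : (0:G) ≤ ((x ⊓ (l + a)) ⊔ l) - l := by
    rw [sub_nonneg]; exact le_sup_right
  rw [abs_of_nonpos h1, abs_of_nonneg h2, neg_sub]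
  have e1 : l - ((x ⊓ l) ⊔ (l - a)) = ((l - x) ⊔ 0) ⊓ a := by
    rw [sub_sup, sub_inf, sub_self, sub_sub_cancel]
  have e2 : ((x ⊓ (l + a)) ⊔ l) - l = ((x - l) ⊔ 0) ⊓ a := by
    rw [sup_sub, inf_sub, sub_self, add_sub_cancel_left, sup_inf_right, sup_eq_left.2 ha]
  rw [e1, e2]
  have hxl : |x - l| = ((x - l) ⊔ 0) + ((l - x) ⊔ 0) := by
    rw [← posPart_add_negPart (x - l), posPart_def, negPart_def, neg_sub]
  rw [hxl, add_comm (((l - x) ⊔ 0) ⊓ a)]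
  exact inf_add_ineq le_sup_right le_sup_right ha

/-- Sandwich bound for the absolute value. -/
lemma abs_sub_le_of_between {y z u l : G} (h1 : y ≤ u) (h2 : u ≤ z) (h3 : y ≤ l) (h4 : l ≤ z) :
    |u - l| ≤ z - y :=
  abs_le'.2 ⟨sub_le_sub h2 h3, by rw [neg_sub]; exact sub_le_sub h4 h1⟩

lemma isLUB_image_const_sub {S : Set G} {b : G} (c : G) (h : IsGLB S b) :
    IsLUB ((fun n => c - n) '' S) (c - b) := by
  constructor
  · rintro _ ⟨n, hn, rfl⟩
    exact sub_le_sub_left (h.1 hn) c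
  · intro u hu
    rw [sub_le_iff_le_add, ← sub_le_iff_le_add']
    exact h.2 fun n hn => by
      have := hu ⟨n, hn, rfl⟩
      rwa [sub_le_iff_le_add, ← sub_le_iff_le_add'] at this
  
lemma isGLB_image_const_add {S : Set G} {b : G} (c : G) (h : IsGLB S b) :
    IsGLB ((fun n => c + n) '' S) (c + b) := by
  constructor
  · rintro _ ⟨n, hn, rfl⟩
    exact add_le_add_right (h.1 hn) c
  · intro u hu
    rw [← sub_le_iff_le_add']
    exact h.2 fun n hn => by
      have := hu ⟨n, hn, rfl⟩
      rwa [← sub_le_iff_le_add'] at this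

/-- glb of differences of a converging sup/inf pair of sets is 0. -/
lemma isGLB_diffs {M N : Set G} {l : G} (hM : M.Nonempty) (hN : N.Nonempty)
    (hMl : IsLUB M l) (hNl : IsGLB N l) :
    IsGLB {w | ∃ m ∈ M, ∃ n ∈ N, w = n - m} 0 := by
  constructor
  · rintro _ ⟨m, hm, n, hn, rfl⟩
    rw [sub_nonneg]
    exact (hMl.1 hm).trans (hNl.1 hn)
  · intro c hc
    have h1 : ∀ n ∈ N, c + l ≤ n := by
      intro n hn
      have hl : l ≤ n - c := hMl.2 fun m hm => le_sub_comm.mp (hc ⟨m, hm, n, hn, rfl⟩)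
      rw [add_comm]
      exact le_sub_iff_add_le.mp hl
    have h2 : c + l ≤ l := hNl.2 h1
    exact (add_le_iff_nonpos_left).mp h2

lemma isGLB_sums {S T : Set G} (hS : S.Nonempty) (hT : T.Nonempty)
    (h0S : IsGLB S 0) (h0T : IsGLB T 0) :
    IsGLB {w | ∃ u ∈ S, ∃ v ∈ T, w = u + v} 0 := by
  constructor
  · rintro _ ⟨u, hu, v, hv, rfl⟩
    exact add_nonneg (h0S.1 hu) (h0T.1 hv)
  · intro c hc
    have h1 : ∀ v ∈ T, c ≤ v := by
      intro v hv
      have : c - v ≤ 0 := h0S.2 fun u hu => by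
        have := hc ⟨u, hu, v, hv, rfl⟩
        rwa [sub_le_iff_le_add]
      exact sub_nonpos.mp this
    exact h0T.2 h1

end Helpers

section RangeHelpers

variable {G : Type*} [Lattice G] [AddCommGroup G] [CovariantClass G G (· + ·) (· ≤ ·)]
variable {Γ : Type*} [Preorder Γ] [IsDirected Γ (· ≤ ·)]

lemma isGLB_range_sub {y z : Γ → G} {l : G} (hy : Monotone y) (hz : Antitone z)
    (hly : IsLUB (Set.range y) l) (hgz : IsGLB (Set.range z) l) :
    IsGLB (Set.range fun γ => z γ - y γ) 0 := by
  constructor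
  · rintro _ ⟨γ, rfl⟩
    exact sub_nonneg.2 ((hly.1 ⟨γ, rfl⟩).trans (hgz.1 ⟨γ, rfl⟩))
  · intro c hc
    have h1 : ∀ δ, l ≤ z δ - c := by
      intro δ
      refine hly.2 ?_
      rintro _ ⟨γ, rfl⟩
      obtain ⟨β, hγβ, hδβ⟩ := directed_of (· ≤ ·) γ δ
      calc y γ ≤ y β := hy hγβ
        _ ≤ z β - c := le_sub_comm.mp (hc ⟨β, rfl⟩)
        _ ≤ z δ - c := sub_le_sub_right (hz hδβ) c
    have h2 : c + l ≤ l := hgz.2 (by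
      rintro _ ⟨δ, rfl⟩
      rw [add_comm]
      exact le_sub_iff_add_le.mp (h1 δ))
    exact add_le_iff_nonpos_left.mp h2

lemma isGLB_range_add {u v : Γ → G} (hu : Antitone u) (hv : Antitone v)
    (h0u : IsGLB (Set.range u) 0) (h0v : IsGLB (Set.range v) 0) :
    IsGLB (Set.range fun γ => u γ + v γ) 0 := by
  constructor
  · rintro _ ⟨γ, rfl⟩
    exact add_nonneg (h0u.1 ⟨γ, rfl⟩) (h0v.1 ⟨γ, rfl⟩)
  · intro c hc
    refine h0v.2 ?_
    rintro _ ⟨δ, rfl⟩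
    have h2 : c - v δ ≤ 0 := h0u.2 (by
      rintro _ ⟨γ, rfl⟩
      obtain ⟨β, hγβ, hδβ⟩ := directed_of (· ≤ ·) γ δ
      calc c - v δ ≤ c - v β := sub_le_sub_left (hv hδβ) c
        _ ≤ u β := sub_le_iff_le_add.mpr (hc ⟨β, rfl⟩)
        _ ≤ u γ := hu hγβ)
    exact sub_nonpos.mp h2

end RangeHelpers

theorem uAOi_iff_FOi {G : Type*} {Γ : Type*} [Lattice G] [AddCommGroup G]
    [CovariantClass G G (· + ·) (· ≤ ·)] [Preorder Γ]
    [Nonempty Γ] [IsDirected Γ (· ≤ ·)]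
    (A : AddSubgroup G) (hA : ∀ a ∈ A, ∀ x : G, |x| ≤ |a| → x ∈ A)
    (F : Set (G → G))
    (hF : F = {f | ∃ s t : G, t - s ∈ A ∧ 0 ≤ t - s ∧ f = fun x => (x ⊓ t) ⊔ s})
    (x : Γ → G) (l : G) :
    ((∀ a ∈ A, 0 ≤ a → O1Conv (fun γ => |x γ - l| ⊓ a) (0 : G)) ↔
      (∀ f ∈ F, O1Conv (fun γ => f (x γ)) (f l))) ∧
    ((∀ a ∈ A, 0 ≤ a → O2Conv (fun γ => |x γ - l| ⊓ a) (0 : G)) ↔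
      (∀ f ∈ F, O2Conv (fun γ => f (x γ)) (f l))) := by
  subst hF
  -- membership of the two special truncations
  have hf₁ : ∀ a : G, a ∈ A → 0 ≤ a → (fun u : G => (u ⊓ l) ⊔ (l - a)) ∈
      {f | ∃ s t : G, t - s ∈ A ∧ 0 ≤ t - s ∧ f = fun x => (x ⊓ t) ⊔ s} :=
    fun a haA ha => ⟨l - a, l, by rwa [sub_sub_cancel], by rwa [sub_sub_cancel], rfl⟩
  have hf₂ : ∀ a : G, a ∈ A → 0 ≤ a → (fun u : G => (u ⊓ (l + a)) ⊔ l) ∈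
      {f | ∃ s t : G, t - s ∈ A ∧ 0 ≤ t - s ∧ f = fun x => (x ⊓ t) ⊔ s} :=
    fun a haA ha => ⟨l, l + a, by rwa [add_sub_cancel_left], by rwa [add_sub_cancel_left], rfl⟩
  have e₁ : ∀ a : G, 0 ≤ a → ((l ⊓ l) ⊔ (l - a)) = l := fun a ha => by
    rw [inf_idem]
    exact sup_eq_left.2 (sub_le_self l ha)
  have e₂ : ∀ a : G, 0 ≤ a → ((l ⊓ (l + a)) ⊔ l) = l := fun a ha => by
    rw [inf_eq_left.2 (le_add_of_nonneg_right ha), sup_idem]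
  constructor
  · -- O1 case
    constructor
    · rintro h f ⟨s, t, htsA, hts, rfl⟩
      dsimp only
      obtain ⟨y, z, hy, hz, hly, hgz, γ₀, hev⟩ := h (t - s) htsA hts
      refine ⟨fun γ => ((l ⊓ t) ⊔ s) - z γ, fun γ => ((l ⊓ t) ⊔ s) + z γ,
        fun γ δ hγδ => sub_le_sub_left (hz hγδ) _,
        fun γ δ hγδ => add_le_add_right (hz hγδ) _, ?_, ?_, γ₀, fun γ hγ => ?_⟩
      · have h1 := isLUB_image_const_sub ((l ⊓ t) ⊔ s) hgz
        rw [← Set.range_comp, sub_zero] at h1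
        exact h1
      · have h1 := isGLB_image_const_add ((l ⊓ t) ⊔ s) hgz
        rw [← Set.range_comp, add_zero] at h1
        exact h1
      · have hk := (key1 (sub_nonneg.mp hts) (x γ) l).trans (hev γ hγ).2
        obtain ⟨hk1, hk2⟩ := abs_le'.mp hk
        rw [neg_sub] at hk2
        exact ⟨sub_le_comm.mp hk2, sub_le_iff_le_add'.mp hk1⟩
    · intro h a haA ha
      obtain ⟨y₁, z₁, hy₁, hz₁, hl₁, hg₁, γ₁, hev₁⟩ := h _ (hf₁ a haA ha)
      obtain ⟨y₂, z₂, hy₂, hz₂, hl₂, hg₂, γ₂, hev₂⟩ := h _ (hf₂ a haA ha)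
      dsimp only at hl₁ hg₁ hl₂ hg₂ hev₁ hev₂
      rw [e₁ a ha] at hl₁ hg₁
      rw [e₂ a ha] at hl₂ hg₂
      obtain ⟨γ₀, hγ₁, hγ₂⟩ := directed_of (· ≤ ·) γ₁ γ₂
      refine ⟨fun _ => 0, fun γ => (z₁ γ - y₁ γ) + (z₂ γ - y₂ γ), monotone_const,
        fun γ δ hγδ => add_le_add (sub_le_sub (hz₁ hγδ) (hy₁ hγδ))
          (sub_le_sub (hz₂ hγδ) (hy₂ hγδ)), ?_, ?_, γ₀, fun γ hγ => ?_⟩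
      · rw [Set.range_const]
        exact isLUB_singleton
      · exact isGLB_range_add
          (fun γ δ hγδ => sub_le_sub (hz₁ hγδ) (hy₁ hγδ))
          (fun γ δ hγδ => sub_le_sub (hz₂ hγδ) (hy₂ hγδ))
          (isGLB_range_sub hy₁ hz₁ hl₁ hg₁) (isGLB_range_sub hy₂ hz₂ hl₂ hg₂)
      · refine ⟨le_inf (abs_nonneg _) ha, ?_⟩
        have b₁ : |((x γ ⊓ l) ⊔ (l - a)) - l| ≤ z₁ γ - y₁ γ :=
          abs_sub_le_of_between (hev₁ γ (hγ₁.trans hγ)).1 (hev₁ γ (hγ₁.trans hγ)).2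
            (hl₁.1 ⟨γ, rfl⟩) (hg₁.1 ⟨γ, rfl⟩)
        have b₂ : |((x γ ⊓ (l + a)) ⊔ l) - l| ≤ z₂ γ - y₂ γ :=
          abs_sub_le_of_between (hev₂ γ (hγ₂.trans hγ)).1 (hev₂ γ (hγ₂.trans hγ)).2
            (hl₂.1 ⟨γ, rfl⟩) (hg₂.1 ⟨γ, rfl⟩)
        exact (key2 ha (x γ) l).trans (add_le_add b₁ b₂)
  · -- O2 case
    constructor
    · rintro h f ⟨s, t, htsA, hts, rfl⟩
      dsimp only
      obtain ⟨M, N, hMne, hMd, hNne, hNd, hMl, hNl, hev⟩ := h (t - s) htsA hts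
      refine ⟨(fun n => ((l ⊓ t) ⊔ s) - n) '' N, (fun n => ((l ⊓ t) ⊔ s) + n) '' N,
        hNne.image _, ?_, hNne.image _, ?_, ?_, ?_, ?_⟩
      · rintro _ ⟨n₁, hn₁, rfl⟩ _ ⟨n₂, hn₂, rfl⟩
        obtain ⟨n₃, hn₃, h₁, h₂⟩ := hNd n₁ hn₁ n₂ hn₂
        exact ⟨_, ⟨n₃, hn₃, rfl⟩, sub_le_sub_left h₁ _, sub_le_sub_left h₂ _⟩
      · rintro _ ⟨n₁, hn₁, rfl⟩ _ ⟨n₂, hn₂, rfl⟩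
        obtain ⟨n₃, hn₃, h₁, h₂⟩ := hNd n₁ hn₁ n₂ hn₂
        exact ⟨_, ⟨n₃, hn₃, rfl⟩, add_le_add_right h₁ _, add_le_add_right h₂ _⟩
      · have h1 := isLUB_image_const_sub ((l ⊓ t) ⊔ s) hNl
        rwa [sub_zero] at h1
      · have h1 := isGLB_image_const_add ((l ⊓ t) ⊔ s) hNl
        rwa [add_zero] at h1
      · rintro _ ⟨n₁, hn₁, rfl⟩ _ ⟨n₂, hn₂, rfl⟩
        obtain ⟨n₃, hn₃, h₁, h₂⟩ := hNd n₁ hn₁ n₂ hn₂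
        obtain ⟨m, hm⟩ := hMne
        obtain ⟨γ₀, hev'⟩ := hev m hm n₃ hn₃
        refine ⟨γ₀, fun γ hγ => ?_⟩
        have hk := (key1 (sub_nonneg.mp hts) (x γ) l).trans (hev' γ hγ).2
        obtain ⟨hk1, hk2⟩ := abs_le'.mp hk
        rw [neg_sub] at hk2
        exact ⟨(sub_le_sub_left h₁ _).trans (sub_le_comm.mp hk2),
          (sub_le_iff_le_add'.mp hk1).trans (add_le_add_right h₂ _)⟩
    · intro h a haA ha
      obtain ⟨M₁, N₁, hM₁ne, hM₁d, hN₁ne, hN₁d, hM₁l, hN₁l, hev₁⟩ := h _ (hf₁ a haA ha)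
      obtain ⟨M₂, N₂, hM₂ne, hM₂d, hN₂ne, hN₂d, hM₂l, hN₂l, hev₂⟩ := h _ (hf₂ a haA ha)
      dsimp only at hM₁l hN₁l hM₂l hN₂l hev₁ hev₂
      rw [e₁ a ha] at hM₁l hN₁l
      rw [e₂ a ha] at hM₂l hN₂l
      obtain ⟨m₁, hm₁⟩ := hM₁ne
      obtain ⟨n₁, hn₁⟩ := hN₁ne
      obtain ⟨m₂, hm₂⟩ := hM₂ne
      obtain ⟨n₂, hn₂⟩ := hN₂ne
      refine ⟨{0}, {w | ∃ u ∈ {w | ∃ m ∈ M₁, ∃ n ∈ N₁, w = n - m},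
          ∃ v ∈ {w | ∃ m ∈ M₂, ∃ n ∈ N₂, w = n - m}, w = u + v},
        ⟨0, rfl⟩, ?_, ⟨(n₁ - m₁) + (n₂ - m₂), ⟨n₁ - m₁, ⟨m₁, hm₁, n₁, hn₁, rfl⟩,
          n₂ - m₂, ⟨m₂, hm₂, n₂, hn₂, rfl⟩, rfl⟩⟩, ?_, isLUB_singleton,
        isGLB_sums ⟨n₁ - m₁, ⟨m₁, hm₁, n₁, hn₁, rfl⟩⟩ ⟨n₂ - m₂, ⟨m₂, hm₂, n₂, hn₂, rfl⟩⟩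
          (isGLB_diffs ⟨m₁, hm₁⟩ ⟨n₁, hn₁⟩ hM₁l hN₁l)
          (isGLB_diffs ⟨m₂, hm₂⟩ ⟨n₂, hn₂⟩ hM₂l hN₂l), ?_⟩
      · intro u hu v hv
        exact ⟨0, rfl, le_of_eq hu, le_of_eq hv⟩
      · rintro _ ⟨_, ⟨p₁, hp₁, q₁, hq₁, rfl⟩, _, ⟨p₂, hp₂, q₂, hq₂, rfl⟩, rfl⟩
          _ ⟨_, ⟨p₁', hp₁', q₁', hq₁', rfl⟩, _, ⟨p₂', hp₂', q₂', hq₂', rfl⟩, rfl⟩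
        obtain ⟨p₁'', hp₁'', hP1, hP1'⟩ := hM₁d p₁ hp₁ p₁' hp₁'
        obtain ⟨q₁'', hq₁'', hQ1, hQ1'⟩ := hN₁d q₁ hq₁ q₁' hq₁'
        obtain ⟨p₂'', hp₂'', hP2, hP2'⟩ := hM₂d p₂ hp₂ p₂' hp₂'
        obtain ⟨q₂'', hq₂'', hQ2, hQ2'⟩ := hN₂d q₂ hq₂ q₂' hq₂'
        exact ⟨(q₁'' - p₁'') + (q₂'' - p₂''),
          ⟨q₁'' - p₁'', ⟨p₁'', hp₁'', q₁'', hq₁'', rfl⟩,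
            q₂'' - p₂'', ⟨p₂'', hp₂'', q₂'', hq₂'', rfl⟩, rfl⟩,
          add_le_add (sub_le_sub hQ1 hP1) (sub_le_sub hQ2 hP2),
          add_le_add (sub_le_sub hQ1' hP1') (sub_le_sub hQ2' hP2')⟩
      · intro m' hm'
        rw [Set.mem_singleton_iff] at hm'
        subst hm'
        rintro _ ⟨_, ⟨p₁, hp₁, q₁, hq₁, rfl⟩, _, ⟨p₂, hp₂, q₂, hq₂, rfl⟩, rfl⟩
        obtain ⟨δ₁, hevd₁⟩ := hev₁ p₁ hp₁ q₁ hq₁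
        obtain ⟨δ₂, hevd₂⟩ := hev₂ p₂ hp₂ q₂ hq₂
        obtain ⟨γ₀, hδ₁, hδ₂⟩ := directed_of (· ≤ ·) δ₁ δ₂
        refine ⟨γ₀, fun γ hγ => ⟨le_inf (abs_nonneg _) ha, ?_⟩⟩
        have b₁ : |((x γ ⊓ l) ⊔ (l - a)) - l| ≤ q₁ - p₁ :=
          abs_sub_le_of_between (hevd₁ γ (hδ₁.trans hγ)).1 (hevd₁ γ (hδ₁.trans hγ)).2
            (hM₁l.1 hp₁) (hN₁l.1 hq₁)
        have b₂ : |((x γ ⊓ (l + a)) ⊔ l) - l| ≤ q₂ - p₂ :=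
          abs_sub_le_of_between (hevd₂ γ (hδ₂.trans hγ)).1 (hevd₂ γ (hδ₂.trans hγ)).2
            (hM₂l.1 hp₂) (hN₂l.1 hq₂)
        exact (key2 ha (x γ) l).trans (add_le_add b₁ b₂)
end

section
/- Let $X$ be a topological space whose topology makes $X$ a lattice with continuous operations, let $u$ be a lattice uniformity on the distributive lattice $L$, let $u^*$ be the weakest lattice uniformity agreeing with $u$ on all order bounded subsets, and let $S$ be a sublattice of $L$. Then $S$ is closed in the $u^*$-topology if and only if $S$ is closed in the $u$-topology. More precisely: for any infinite cardinal $\kappa$, $S$ is $\kappa$-closed w.r.t. the $u^*$-topology (contains limits of all convergent nets from $S$ indexed by directed sets of cardinality at most $\kappa$) iff it is $\kappa$-closed w.r.t. the $u$-topology. -/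
universe u

/-- `S` is `κ`-closed w.r.t. the topology `t`: it contains the limit of every
convergent net from `S` indexed by a directed set of cardinality at most `κ`. -/
def KClosed {L : Type u} (t : TopologicalSpace L) (κ : Cardinal.{u}) (S : Set L) : Prop :=
  ∀ (Λ : DirectedIndex.{u}), Cardinal.mk Λ.carrier ≤ κ →
    ∀ s : Λ.carrier → L, (∀ γ, s γ ∈ S) →
      ∀ x : L, (∀ U ∈ @nhds L t x, ∃ γ₀, ∀ γ, γ₀ ≤ γ → s γ ∈ U) → x ∈ S

/-- Key filter-based lemma: if a filter containing `S` converges to `x` in the `ustar`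
topology, and `S` is "closed" for limits along pushforwards of this filter in the `u`
topology, then `x ∈ S`. -/
lemma key_aux {L : Type u} [DistribLattice L] (u ustar : UniformSpace L)
    (hcont : ∀ a b : L, a ≤ b →
      @Continuous L L ustar.toTopologicalSpace u.toTopologicalSpace (fun w => (w ⊓ b) ⊔ a))
    (S : Set L)
    (hSsup : ∀ a ∈ S, ∀ b ∈ S, a ⊔ b ∈ S) (hSinf : ∀ a ∈ S, ∀ b ∈ S, a ⊓ b ∈ S)
    (F : Filter L) (hF : F.NeBot) (hFS : ∀ᶠ w in F, w ∈ S)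
    (x : L) (hFx : F ≤ @nhds L ustar.toTopologicalSpace x)
    (hclosed : ∀ g : L → L, (∀ w ∈ S, g w ∈ S) →
      ∀ y : L, Filter.Tendsto g F (@nhds L u.toTopologicalSpace y) → y ∈ S) :
    x ∈ S := by
  obtain ⟨s, hs⟩ := hFS.exists
  have distr : ∀ a b w : L, a ≤ b → (w ⊓ b) ⊔ a = (w ⊔ a) ⊓ b := by
    intro a b w h
    rw [sup_inf_right, sup_eq_left.mpr h]
  have tendsto_f : ∀ a b : L, a ≤ b →
      Filter.Tendsto (fun w => (w ⊓ b) ⊔ a) F (@nhds L u.toTopologicalSpace ((x ⊓ b) ⊔ a)) := by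
    intro a b h
    exact Filter.Tendsto.mono_left (@Continuous.tendsto L L ustar.toTopologicalSpace u.toTopologicalSpace _ (hcont a b h) x) hFx
  -- Step 1: (x ⊔ s) ⊓ (y ⊔ s) ∈ S for all y ∈ S
  have h1 : ∀ y ∈ S, (x ⊔ s) ⊓ (y ⊔ s) ∈ S := by
    intro y hy
    have hsb : s ≤ y ⊔ s := le_sup_right
    refine hclosed (fun w => (w ⊓ (y ⊔ s)) ⊔ s) ?_ _ ?_
    · intro w hw
      show (w ⊓ (y ⊔ s)) ⊔ s ∈ S
      rw [distr _ _ _ hsb]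
      exact hSinf _ (hSsup w hw s hs) _ (hSsup y hy s hs)
    · have := tendsto_f s (y ⊔ s) hsb
      rwa [distr _ _ _ hsb] at this
  -- Step 2: x ⊔ s ∈ S
  have h2 : x ⊔ s ∈ S := by
    have hsb : s ≤ x ⊔ s := le_sup_right
    refine hclosed (fun w => (w ⊓ (x ⊔ s)) ⊔ s) ?_ _ ?_
    · intro w hw
      show (w ⊓ (x ⊔ s)) ⊔ s ∈ S
      rw [distr _ _ _ hsb, inf_comm]
      exact h1 w hw
    · have := tendsto_f s (x ⊔ s) hsb
      rwa [inf_sup_self] at this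
  -- Step 3: (x ⊓ s) ⊔ (y ⊓ s) ∈ S for all y ∈ S
  have h3 : ∀ y ∈ S, (x ⊓ s) ⊔ (y ⊓ s) ∈ S := by
    intro y hy
    refine hclosed (fun w => (w ⊓ s) ⊔ (y ⊓ s)) ?_ _ (tendsto_f (y ⊓ s) s inf_le_right)
    intro w hw
    show (w ⊓ s) ⊔ (y ⊓ s) ∈ S
    exact hSsup _ (hSinf w hw s hs) _ (hSinf y hy s hs)
  -- Step 4: x ⊓ s ∈ S
  have h4 : x ⊓ s ∈ S := by
    refine hclosed (fun w => (w ⊓ s) ⊔ (x ⊓ s)) ?_ _ ?_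
    · intro w hw
      show (w ⊓ s) ⊔ (x ⊓ s) ∈ S
      rw [sup_comm]
      exact h3 w hw
    · have := tendsto_f (x ⊓ s) s inf_le_right
      rwa [sup_idem] at this
  -- Step 5: x ∈ S
  have hab : x ⊓ s ≤ x ⊔ s := le_trans inf_le_left le_sup_left
  refine hclosed (fun w => (w ⊓ (x ⊔ s)) ⊔ (x ⊓ s)) ?_ _ ?_
  · intro w hw
    show (w ⊓ (x ⊔ s)) ⊔ (x ⊓ s) ∈ S
    rw [distr _ _ _ hab]
    exact hSinf _ (hSsup w hw _ h4) _ h2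
  · have := tendsto_f (x ⊓ s) (x ⊔ s) hab
    rwa [inf_sup_self, sup_inf_self] at this

lemma huc_aux {L : Type u} [DistribLattice L] [u : UniformSpace L]
    (hsup : UniformContinuous fun p : L × L => p.1 ⊔ p.2)
    (hinf : UniformContinuous fun p : L × L => p.1 ⊓ p.2)
    (a b : L) : UniformContinuous (fun w : L => (w ⊓ b) ⊔ a) := by
  have h1 : UniformContinuous fun w : L => w ⊓ b :=
    hinf.comp (uniformContinuous_id.prodMk uniformContinuous_const)
  have h2 : UniformContinuous fun w : L => w ⊔ a :=
    hsup.comp (uniformContinuous_id.prodMk uniformContinuous_const)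
  exact h2.comp h1

theorem sublattice_closed_ustar_iff_closed {L : Type u} [DistribLattice L]
    [u : UniformSpace L]
    (hsup : UniformContinuous fun p : L × L => p.1 ⊔ p.2)
    (hinf : UniformContinuous fun p : L × L => p.1 ⊓ p.2)
    (S : Set L)
    (hSsup : ∀ a ∈ S, ∀ b ∈ S, a ⊔ b ∈ S) (hSinf : ∀ a ∈ S, ∀ b ∈ S, a ⊓ b ∈ S)
    (ustar : UniformSpace L)
    (hustar : ustar = ⨅ p : {q : L × L // q.1 ≤ q.2},
      UniformSpace.comap (fun x => (x ⊓ p.val.2) ⊔ p.val.1) u) :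
    (@IsClosed L ustar.toTopologicalSpace S ↔ @IsClosed L u.toTopologicalSpace S) ∧
    (@IsSeqClosed L ustar.toTopologicalSpace S ↔ @IsSeqClosed L u.toTopologicalSpace S) ∧
    (∀ κ : Cardinal.{u}, Cardinal.aleph0 ≤ κ →
      (KClosed ustar.toTopologicalSpace κ S ↔ KClosed u.toTopologicalSpace κ S)) := by
  -- Each map `f_{a,b}` is uniformly continuous w.r.t. `u`.
  have huc : ∀ a b : L, @UniformContinuous L L u u (fun w : L => (w ⊓ b) ⊔ a) :=
    fun a b => @huc_aux L _ u hsup hinf a b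
  -- `u ≤ ustar` (u is finer as a uniform space).
  have hle : u ≤ ustar := by
    rw [hustar]
    exact le_iInf fun p => (@uniformContinuous_iff L L u u _).mp (huc p.val.1 p.val.2)
  have htle : u.toTopologicalSpace ≤ ustar.toTopologicalSpace :=
    UniformSpace.toTopologicalSpace_mono hle
  have hnhds : ∀ x : L, @nhds L u.toTopologicalSpace x ≤ @nhds L ustar.toTopologicalSpace x :=
    fun x => nhds_mono htle
  -- Each map `f_{a,b}` (a ≤ b) is continuous from the `ustar` topology to the `u` topology.
  have hcont : ∀ a b : L, a ≤ b →
      @Continuous L L ustar.toTopologicalSpace u.toTopologicalSpace (fun w => (w ⊓ b) ⊔ a) := by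
    intro a b hab
    have h : ustar ≤ UniformSpace.comap (fun x => (x ⊓ b) ⊔ a) u := by
      rw [hustar]
      exact iInf_le _ (⟨(a, b), hab⟩ : {q : L × L // q.1 ≤ q.2})
    exact @UniformContinuous.continuous L L ustar u _ ((@uniformContinuous_iff L L ustar u _).mpr h)
  refine ⟨⟨?_, ?_⟩, ⟨?_, ?_⟩, fun κ _ => ⟨?_, ?_⟩⟩
  · -- ustar-closed → u-closed (easy direction)
    intro hc
    rw [@isClosed_iff_clusterPt] at hc ⊢
    intro a ha
    refine hc a ?_
    rcases ha with ⟨hne⟩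
    exact ⟨ne_bot_of_le_ne_bot hne (inf_le_inf_right _ (hnhds a))⟩
  · -- u-closed → ustar-closed (hard direction)
    intro hc
    rw [@isClosed_iff_clusterPt]
    intro a ha
    have hne : (@nhds L ustar.toTopologicalSpace a ⊓ Filter.principal S).NeBot := ha
    refine key_aux u ustar hcont S hSsup hSinf
      (@nhds L ustar.toTopologicalSpace a ⊓ Filter.principal S) hne ?_ a inf_le_left ?_
    · exact Filter.le_principal_iff.mp inf_le_right
    · intro g hg y hy
      have hmem : (@nhds L ustar.toTopologicalSpace a ⊓ Filter.principal S) ≤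
          Filter.principal S := inf_le_right
      have h1 : Filter.map g (@nhds L ustar.toTopologicalSpace a ⊓ Filter.principal S) ≤
          @nhds L u.toTopologicalSpace y ⊓ Filter.principal S := by
        refine le_inf hy ?_
        rw [Filter.map_le_iff_le_comap]
        refine le_trans hmem ?_
        rw [Filter.le_def]
        intro t ht
        simp only [Filter.mem_comap, Filter.mem_principal] at ht ⊢
        obtain ⟨t', ht', hsub⟩ := ht
        intro w hw
        exact hsub (Set.mem_preimage.mpr (ht' (hg w hw)))
      have : (@nhds L u.toTopologicalSpace y ⊓ Filter.principal S).NeBot :=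
        ⟨ne_bot_of_le_ne_bot (Filter.map_neBot (hf := hne)).ne h1⟩
      exact (@isClosed_iff_clusterPt L u.toTopologicalSpace S).mp hc y this
  · -- ustar-seq-closed → u-seq-closed
    intro hc x p hxS hxp
    exact hc hxS (hxp.mono_right (hnhds p))
  · -- u-seq-closed → ustar-seq-closed
    intro hc x p hxS hxp
    refine key_aux u ustar hcont S hSsup hSinf (Filter.map x Filter.atTop)
      (Filter.map_neBot) ?_ p hxp ?_
    · exact Filter.eventually_map.mpr (Filter.Eventually.of_forall hxS)
    · intro g hg y hy
      exact hc (fun n => hg (x n) (hxS n)) (by rwa [Filter.tendsto_map'_iff] at hy)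
  · -- ustar-KClosed → u-KClosed
    intro hc Λ hκ s hsS x hx
    refine hc Λ hκ s hsS x fun U hU => hx U (hnhds x hU)
  · -- u-KClosed → ustar-KClosed
    intro hc Λ hκ s hsS x hx
    have htendsto : Filter.Tendsto s Filter.atTop (@nhds L ustar.toTopologicalSpace x) := by
      rw [Filter.tendsto_def]
      intro U hU
      obtain ⟨γ₀, hγ₀⟩ := hx U hU
      exact Filter.mem_of_superset (Filter.Ici_mem_atTop γ₀) (fun γ hγ => hγ₀ γ hγ)
    refine key_aux u ustar hcont S hSsup hSinf (Filter.map s Filter.atTop)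
      (Filter.map_neBot) ?_ x htendsto ?_
    · exact Filter.eventually_map.mpr (Filter.Eventually.of_forall hsS)
    · intro g hg y hy
      refine hc Λ hκ (fun γ => g (s γ)) (fun γ => hg (s γ) (hsS γ)) y ?_
      intro U hU
      have : ∀ᶠ γ in (Filter.atTop : Filter Λ.carrier), g (s γ) ∈ U := by
        rw [Filter.tendsto_map'_iff] at hy
        exact hy hU
      rw [Filter.eventually_atTop] at this
      obtain ⟨γ₀, h⟩ := this
      exact ⟨γ₀, fun γ hγ => h γ hγ⟩
end
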